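/- arXiv:2102.00995 — 2 statements merged into one kernel-verified Lean document; each statement's English description precedes it below -/
import Mathlib

section
/- Let X_1,…,X_N be vectors in ℝ^d, let K be odd and divide N, let B_1,…,B_K be an equipartition of {1,…,N} into blocks of size N/K, and let X̄_k = (K/N)·Σ_{i∈B_k} X_i. For μ ∈ ℝ^d let ℓ_μ(x) = ‖x−μ‖₂² and P_{B_k}h = (K/N)·Σ_{i∈B_k} h(X_i). Then for every μ ∈ ℝ^d, sup_{ν∈ℝ^d} Med( P_{B_k}(ℓ_μ − ℓ_ν) : k ∈ [K] ) = ( sup_{‖v‖₂=1} Med(⟨X̄_k − μ, v⟩ : k ∈ [K]) )². Consequently, the set of minimizers over μ ∈ ℝ^d of sup_{ν∈ℝ^d} Med(P_{B_k}(ℓ_μ − ℓ_ν)) equals the set of minimizers of μ ↦ sup_{‖v‖₂=1} Med(⟨X̄_k − μ, v⟩), i.e. the minmax MOM estimator is a minimizer of the convex function g*_{B_2^d}. -/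
open MeasureTheory ProbabilityTheory

noncomputable section

/-- `ℝ^d` as a Euclidean space. -/
abbrev EVec (d : ℕ) : Type := EuclideanSpace ℝ (Fin d)

/-- The pseudo-norm `‖x‖_S = sup_{v ∈ S} ⟨v, x⟩`. -/
def normS {d : ℕ} (S : Set (EVec d)) (x : EVec d) : ℝ :=
  ⨆ v : S, (inner ℝ (v : EVec d) x : ℝ)

/-- Application of a `d × d` matrix to a vector of `ℝ^d`, as a continuous linear map. -/
def mApply {d : ℕ} (A : Matrix (Fin d) (Fin d) ℝ) : EVec d →L[ℝ] EVec d :=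
  LinearMap.toContinuousLinearMap (Matrix.toEuclideanLin A)

/-- The standard Gaussian measure `N(0, I_d)` on `ℝ^d`. -/
def stdGaussian (d : ℕ) : Measure (EVec d) :=
  (Measure.pi fun _ : Fin d => gaussianReal 0 1).map
    (EuclideanSpace.equiv (Fin d) ℝ).symm

instance stdGaussian_isProb (d : ℕ) : IsProbabilityMeasure (stdGaussian d) :=
  Measure.isProbabilityMeasure_map
    ((EuclideanSpace.equiv (Fin d) ℝ).symm.continuous.measurable.aemeasurable)

/-- Gaussian mean width `ℓ*(T) = E sup_{t ∈ T} ⟨G, t⟩`, `G ~ N(0, I_d)`. -/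
def meanWidth {d : ℕ} (T : Set (EVec d)) : ℝ :=
  ∫ x, (⨆ t : T, (inner ℝ x (t : EVec d) : ℝ)) ∂(stdGaussian d)

/-- The Gaussian measure on `ℝ^d` that is the law of `μ + A G` for `G ~ N(0, I_d)`;
for `A = Σ^{1/2}` this is `N(μ, Σ)`. -/
def gaussianVec {d : ℕ} (μ : EVec d) (A : Matrix (Fin d) (Fin d) ℝ) :
    Measure (EVec d) :=
  (stdGaussian d).map fun x => μ + mApply A x

instance gaussianVec_isProb {d : ℕ} (μ : EVec d) (A : Matrix (Fin d) (Fin d) ℝ) :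
    IsProbabilityMeasure (gaussianVec μ A) :=
  Measure.isProbabilityMeasure_map
    ((continuous_const.add (mApply A).continuous).measurable.aemeasurable)

/-- Order statistics of a `K`-tuple of reals (`orderStat a k` is the `k`-th smallest). -/
def orderStat {K : ℕ} (a : Fin K → ℝ) : Fin K → ℝ := a ∘ Tuple.sort a

/-- The median of `K` reals: for odd `K` it is the `(K+1)/2`-th order statistic. -/
def med {K : ℕ} (a : Fin K → ℝ) : ℝ :=
  if h : K = 0 then 0
  else orderStat a ⟨K / 2, Nat.div_lt_self (Nat.pos_of_ne_zero h) one_lt_two⟩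

/-- The bucketed mean `X̄_k = (K/N) Σ_{i ∈ B_k} X_i` of the block `B_k`. -/
def blockMean {d N K : ℕ} (X : Fin N → EVec d) (B : Fin K → Finset (Fin N))
    (k : Fin K) : EVec d :=
  ((K : ℝ) / (N : ℝ)) • ∑ i ∈ B k, X i

/-- The Fenchel-Legendre transform of `f` on `S`: `f*_S(μ) = sup_{v ∈ S} (⟨μ,v⟩ - f v)`. -/
def flT {d : ℕ} (S : Set (EVec d)) (f : EVec d → ℝ) (μ : EVec d) : ℝ :=
  ⨆ v : S, ((inner ℝ μ (v : EVec d) : ℝ) - f v)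

/-- The MOM function `g(v) = Med(⟨X̄_k, v⟩ : k ∈ [K])`. -/
def gFun {d K : ℕ} (Xb : Fin K → EVec d) (v : EVec d) : ℝ :=
  med fun k => (inner ℝ (Xb k) v : ℝ)

/-- The interquartile set of ranks `I_K = [(K+1)/4, 3(K+1)/4]`
(1-based ranks; equals `{(K+1)/2 ± j : 0 ≤ j ≤ (K+1)/4}` when `4 ∣ K+1`). -/
def IK (K : ℕ) : Finset (Fin K) :=
  Finset.univ.filter fun k => (K + 1) / 4 ≤ (k : ℕ) + 1 ∧ (k : ℕ) + 1 ≤ 3 * (K + 1) / 4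

/-- `f(v)`: the average of the interquartile order statistics of `(⟨X̄_k, v⟩)_k`. -/
def fFun {d K : ℕ} (Xb : Fin K → EVec d) (v : EVec d) : ℝ :=
  ((IK K).card : ℝ)⁻¹ * ∑ k ∈ IK K, orderStat (fun j => (inner ℝ (Xb j) v : ℝ)) k

/-- The standard Gaussian cumulative distribution function. -/
def Phi (t : ℝ) : ℝ := (gaussianReal 0 1 (Set.Iic t)).toReal

/-- The standard Cauchy distribution on `ℝ`, with density `x ↦ 1/(π(1+x²))`. -/
def stdCauchy : Measure ℝ :=
  MeasureTheory.volume.withDensity fun x => ENNReal.ofReal (Real.pi * (1 + x ^ 2))⁻¹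

end



section Aux

open scoped RealInnerProductSpace

lemma orderStat_comp_mono {K : ℕ} (a : Fin K → ℝ) {φ : ℝ → ℝ} (hφ : Monotone φ) :
    orderStat (fun k => φ (a k)) = fun j => φ (orderStat a j) := by
  have h2 : Monotone ((φ ∘ a) ∘ Tuple.sort a) := hφ.comp (Tuple.monotone_sort a)
  have h3 := (Tuple.comp_sort_eq_comp_iff_monotone (f := φ ∘ a) (σ := Tuple.sort a)).2 h2
  funext j
  have := congrFun h3 j
  simp only [orderStat, Function.comp] at this ⊢
  exact this.symm

lemma med_comp_mono {K : ℕ} (hK : K ≠ 0) (a : Fin K → ℝ) {φ : ℝ → ℝ} (hφ : Monotone φ) :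
    med (fun k => φ (a k)) = φ (med a) := by
  simp [med, hK, orderStat_comp_mono a hφ]

lemma med_neg {K : ℕ} (hK : Odd K) (a : Fin K → ℝ) :
    med (fun k => - a k) = - med a := by
  have hK0 : K ≠ 0 := by rcases hK with ⟨m, rfl⟩; omega
  set mid : Fin K := ⟨K / 2, Nat.div_lt_self (Nat.pos_of_ne_zero hK0) one_lt_two⟩ with hmiddef
  set σ := Tuple.sort a with hσ
  set τ : Equiv.Perm (Fin K) := (Fin.revPerm).trans σ with hτ
  have hmono : Monotone ((fun k => - a k) ∘ τ) := by
    intro i j hij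
    have h1 : Fin.rev j ≤ Fin.rev i := by rw [Fin.rev_le_rev]; exact hij
    have := Tuple.monotone_sort a h1
    simp only [Function.comp, hτ, Equiv.trans_apply, Fin.revPerm_apply]
    simpa using neg_le_neg this
  have h3 := (Tuple.comp_sort_eq_comp_iff_monotone (f := fun k => - a k) (σ := τ)).2 hmono
  have hmid : mid.rev = mid := by
    rcases hK with ⟨m, rfl⟩
    ext
    simp [Fin.rev, hmiddef]
    omega
  have key : orderStat (fun k => -a k) mid = - orderStat a mid := by
    show ((fun k => -a k) ∘ (Tuple.sort fun k => -a k)) mid = _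
    rw [← h3]
    simp [hτ, orderStat, hmid]
    rfl
  simp [med, hK0, hmiddef] at key ⊢
  exact key

lemma med_mem_range {K : ℕ} (hK : K ≠ 0) (a : Fin K → ℝ) : ∃ k, med a = a k := by
  refine ⟨Tuple.sort a ⟨K / 2, Nat.div_lt_self (Nat.pos_of_ne_zero hK) one_lt_two⟩, ?_⟩
  simp [med, hK, orderStat]

lemma sup_quad_eq_sq {d : ℕ} (m : EVec d → ℝ)
    (hsmul : ∀ (t : ℝ) (v : EVec d), 0 ≤ t → m (t • v) = t * m v)
    (hneg : ∀ v : EVec d, m (-v) = - m v)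
    (C : ℝ) (hbound : ∀ v : EVec d, m v ≤ C * ‖v‖) :
    (⨆ w : EVec d, (2 * m w - ‖w‖ ^ 2))
      = (⨆ v : {v : EVec d // ‖v‖ = 1}, m (v : EVec d)) ^ 2 ∧
    0 ≤ ⨆ v : {v : EVec d // ‖v‖ = 1}, m (v : EVec d) := by
  have hm0 : m 0 = 0 := by
    have := hsmul 0 0 le_rfl; simpa using this
  by_cases hne : Nonempty {v : EVec d // ‖v‖ = 1}
  · set S := ⨆ v : {v : EVec d // ‖v‖ = 1}, m (v : EVec d) with hS
    have bddS : BddAbove (Set.range fun v : {v : EVec d // ‖v‖ = 1} => m (v : EVec d)) := by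
      refine ⟨C, ?_⟩
      rintro _ ⟨v, rfl⟩
      simpa [v.2] using hbound (v : EVec d)
    have bddG : BddAbove (Set.range fun w : EVec d => 2 * m w - ‖w‖ ^ 2) := by
      refine ⟨C ^ 2, ?_⟩
      rintro _ ⟨w, rfl⟩
      show 2 * m w - ‖w‖ ^ 2 ≤ C ^ 2
      have h1 := hbound w
      have h2 := norm_nonneg w
      nlinarith [sq_nonneg (C - ‖w‖)]
    have Snn : 0 ≤ S := by
      obtain ⟨v0⟩ := hne
      have h1 : m (v0 : EVec d) ≤ S := le_ciSup bddS v0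
      have h2 : m (-(v0 : EVec d)) ≤ S :=
        le_ciSup bddS ⟨-(v0 : EVec d), by simp [v0.2]⟩
      rw [hneg] at h2
      linarith
    refine ⟨le_antisymm ?_ ?_, Snn⟩
    · apply ciSup_le
      intro w
      by_cases hw : w = (0 : EVec d)
      · subst hw
        simp only [hm0, norm_zero]
        nlinarith [sq_nonneg S]
      · have hnw : ‖w‖ ≠ 0 := norm_ne_zero_iff.mpr hw
        have ht : 0 < ‖w‖ := lt_of_le_of_ne (norm_nonneg w) (Ne.symm hnw)
        set v : EVec d := ‖w‖⁻¹ • w with hv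
        have hv1 : ‖v‖ = 1 := norm_smul_inv_norm hw
        have hwv : m w = ‖w‖ * m v := by
          conv_lhs => rw [← smul_inv_smul₀ hnw w]
          exact hsmul _ _ (norm_nonneg w)
        rw [hwv]
        rcases le_or_gt (m v) 0 with hq | hq
        · nlinarith [sq_nonneg S]
        · have hqS : m v ≤ S := le_ciSup bddS ⟨v, hv1⟩
          have hsq : m v ^ 2 ≤ S ^ 2 := pow_le_pow_left₀ hq.le hqS 2
          nlinarith [sq_nonneg (‖w‖ - m v)]
    · set T := ⨆ w : EVec d, (2 * m w - ‖w‖ ^ 2) with hT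
      have hT0 : 0 ≤ T := by
        have := le_ciSup bddG (0 : EVec d)
        simpa [hm0] using this
      have hle : S ≤ Real.sqrt T := by
        apply ciSup_le
        intro v
        rcases le_or_gt (m (v : EVec d)) 0 with hq | hq
        · exact hq.trans (Real.sqrt_nonneg T)
        · have hqT : (m (v : EVec d)) ^ 2 ≤ T := by
            have h1 := le_ciSup bddG ((m (v : EVec d)) • (v : EVec d))
            rw [hsmul _ _ hq.le, norm_smul, v.2, Real.norm_eq_abs,
              abs_of_pos hq, ← hT] at h1
            nlinarith
          calc m (v : EVec d) = Real.sqrt ((m (v : EVec d)) ^ 2) :=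
                (Real.sqrt_sq hq.le).symm
            _ ≤ Real.sqrt T := Real.sqrt_le_sqrt hqT
      calc S ^ 2 ≤ Real.sqrt T ^ 2 := pow_le_pow_left₀ Snn hle 2
        _ = T := Real.sq_sqrt hT0
  · have hall : ∀ w : EVec d, w = 0 := by
      intro w
      by_contra h
      exact hne ⟨⟨‖w‖⁻¹ • w, norm_smul_inv_norm h⟩⟩
    have hIE : IsEmpty {v : EVec d // ‖v‖ = 1} := not_nonempty_iff.mp hne
    have hS0 : (⨆ v : {v : EVec d // ‖v‖ = 1}, m (v : EVec d)) = 0 :=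
      Real.iSup_of_isEmpty _
    refine ⟨?_, by rw [hS0]⟩
    have h1 : (fun w : EVec d => 2 * m w - ‖w‖ ^ 2) = fun _ => (0 : ℝ) := by
      funext w
      rw [hall w, hm0, norm_zero]; ring
    rw [h1, hS0, ciSup_const]
    norm_num

end Aux

/-- for the quadratic loss `ℓ_μ(x) = ‖x - μ‖₂²` and blocks `B_1, …, B_K`,
`sup_ν Med(P_{B_k}(ℓ_μ - ℓ_ν)) = (sup_{‖v‖₂=1} Med(⟨X̄_k - μ, v⟩))²` for every `μ`; hence the
minimizers of the minmax MOM criterion are exactly the minimizers of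
`μ ↦ sup_{‖v‖₂=1} Med(⟨X̄_k - μ, v⟩)`. -/
theorem stmt3 {d N K : ℕ} (hN : 0 < N) (hK : Odd K) (hKN : K ∣ N)
    (X : Fin N → EVec d) (B : Fin K → Finset (Fin N))
    (hBdisj : ∀ k l : Fin K, k ≠ l → Disjoint (B k) (B l))
    (hBcard : ∀ k, (B k).card = N / K)
    (hBcover : ∀ i : Fin N, ∃ k, i ∈ B k) :
    (∀ μ : EVec d,
        (⨆ ν : EVec d, med fun k =>
            ((K : ℝ) / (N : ℝ)) * ∑ i ∈ B k, (‖X i - μ‖ ^ 2 - ‖X i - ν‖ ^ 2)) =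
          (⨆ v : {v : EVec d // ‖v‖ = 1}, med fun k =>
              (inner ℝ (blockMean X B k - μ) (v : EVec d) : ℝ)) ^ 2) ∧
      {μ : EVec d | ∀ μ' : EVec d,
          (⨆ ν : EVec d, med fun k =>
              ((K : ℝ) / (N : ℝ)) * ∑ i ∈ B k, (‖X i - μ‖ ^ 2 - ‖X i - ν‖ ^ 2)) ≤
            ⨆ ν : EVec d, med fun k =>
              ((K : ℝ) / (N : ℝ)) * ∑ i ∈ B k, (‖X i - μ'‖ ^ 2 - ‖X i - ν‖ ^ 2)} =
        {μ : EVec d | ∀ μ' : EVec d,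
            (⨆ v : {v : EVec d // ‖v‖ = 1}, med fun k =>
                (inner ℝ (blockMean X B k - μ) (v : EVec d) : ℝ)) ≤
              ⨆ v : {v : EVec d // ‖v‖ = 1}, med fun k =>
                (inner ℝ (blockMean X B k - μ') (v : EVec d) : ℝ)} := by
    classical
  have hK0 : K ≠ 0 := by rcases hK with ⟨m, rfl⟩; omega
  have hKne : (K : ℝ) ≠ 0 := Nat.cast_ne_zero.mpr hK0
  have hNne : (N : ℝ) ≠ 0 := Nat.cast_ne_zero.mpr hN.ne'
  have hcn : ((K : ℝ) / (N : ℝ)) * ((N / K : ℕ) : ℝ) = 1 := by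
    rw [Nat.cast_div hKN hKne]
    field_simp
  have hterm : ∀ (μ ν : EVec d) (k : Fin K),
      ((K : ℝ) / (N : ℝ)) * ∑ i ∈ B k, (‖X i - μ‖ ^ 2 - ‖X i - ν‖ ^ 2)
        = 2 * (inner ℝ (blockMean X B k - μ) (ν - μ) : ℝ) - ‖ν - μ‖ ^ 2 := by
    intro μ ν k
    have hpt : ∀ i : Fin N, ‖X i - μ‖ ^ 2 - ‖X i - ν‖ ^ 2
        = 2 * (inner ℝ (X i - μ) (ν - μ) : ℝ) - ‖ν - μ‖ ^ 2 := by
      intro i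
      have h1 : X i - ν = (X i - μ) - (ν - μ) := by abel
      have h2 : ‖(X i - μ) - (ν - μ)‖ ^ 2
          = ‖X i - μ‖ ^ 2 - 2 * (inner ℝ (X i - μ) (ν - μ) : ℝ) + ‖ν - μ‖ ^ 2 :=
        norm_sub_sq_real _ _
      rw [h1, h2]
      ring
    rw [Finset.sum_congr rfl fun i _ => hpt i, Finset.sum_sub_distrib,
      Finset.sum_const, hBcard k, ← Finset.mul_sum, ← sum_inner,
      Finset.sum_sub_distrib, Finset.sum_const, hBcard k,
      ← Nat.cast_smul_eq_nsmul ℝ (N / K) μ]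
    simp only [blockMean, inner_sub_left, real_inner_smul_left, nsmul_eq_mul]
    linear_combination (-(2 * (inner ℝ μ (ν - μ) : ℝ)) - ‖ν - μ‖ ^ 2) * hcn
  have main : ∀ μ : EVec d,
      (⨆ w : EVec d,
          (2 * (med fun k => (inner ℝ (blockMean X B k - μ) w : ℝ)) - ‖w‖ ^ 2))
        = (⨆ v : {v : EVec d // ‖v‖ = 1}, med fun k =>
            (inner ℝ (blockMean X B k - μ) (v : EVec d) : ℝ)) ^ 2 ∧
      0 ≤ ⨆ v : {v : EVec d // ‖v‖ = 1}, med fun k =>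
            (inner ℝ (blockMean X B k - μ) (v : EVec d) : ℝ) := by
    intro μ
    have hs : ∀ (t : ℝ) (v : EVec d), 0 ≤ t →
        (med fun k => (inner ℝ (blockMean X B k - μ) (t • v) : ℝ))
          = t * med fun k => (inner ℝ (blockMean X B k - μ) v : ℝ) := by
      intro t v ht
      have h1 : (fun k => (inner ℝ (blockMean X B k - μ) (t • v) : ℝ))
          = fun k => (fun x => t * x) ((inner ℝ (blockMean X B k - μ) v : ℝ)) :=
        funext fun k => real_inner_smul_right _ _ _
      rw [h1]
      exact med_comp_mono hK0 _ (fun a b hab => mul_le_mul_of_nonneg_left hab ht)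
    have hn : ∀ v : EVec d,
        (med fun k => (inner ℝ (blockMean X B k - μ) (-v) : ℝ))
          = - med fun k => (inner ℝ (blockMean X B k - μ) v : ℝ) := by
      intro v
      have h1 : (fun k => (inner ℝ (blockMean X B k - μ) (-v) : ℝ))
          = fun k => - (inner ℝ (blockMean X B k - μ) v : ℝ) :=
        funext fun k => inner_neg_right _ _
      rw [h1]
      exact med_neg hK _
    have hb : ∀ v : EVec d,
        (med fun k => (inner ℝ (blockMean X B k - μ) v : ℝ))
          ≤ (∑ j : Fin K, ‖blockMean X B j - μ‖) * ‖v‖ := by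
      intro v
      obtain ⟨k, hk⟩ := med_mem_range hK0
        (fun k => (inner ℝ (blockMean X B k - μ) v : ℝ))
      rw [hk]
      calc (inner ℝ (blockMean X B k - μ) v : ℝ)
          ≤ ‖blockMean X B k - μ‖ * ‖v‖ := real_inner_le_norm _ _
        _ ≤ (∑ j : Fin K, ‖blockMean X B j - μ‖) * ‖v‖ :=
            mul_le_mul_of_nonneg_right
              (Finset.single_le_sum (f := fun j : Fin K => ‖blockMean X B j - μ‖)
                (fun j _ => norm_nonneg _) (Finset.mem_univ k))
              (norm_nonneg v)
    exact sup_quad_eq_sq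
      (fun w => med fun k => (inner ℝ (blockMean X B k - μ) w : ℝ)) hs hn _ hb
  have key : ∀ μ : EVec d,
      (⨆ ν : EVec d, med fun k =>
          ((K : ℝ) / (N : ℝ)) * ∑ i ∈ B k, (‖X i - μ‖ ^ 2 - ‖X i - ν‖ ^ 2))
        = (⨆ v : {v : EVec d // ‖v‖ = 1}, med fun k =>
            (inner ℝ (blockMean X B k - μ) (v : EVec d) : ℝ)) ^ 2 := by
    intro μ
    have hmedterm : ∀ ν : EVec d,
        (med fun k =>
            ((K : ℝ) / (N : ℝ)) * ∑ i ∈ B k, (‖X i - μ‖ ^ 2 - ‖X i - ν‖ ^ 2))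
          = 2 * (med fun k => (inner ℝ (blockMean X B k - μ) (ν - μ) : ℝ))
              - ‖ν - μ‖ ^ 2 := by
      intro ν
      have h1 : (fun k =>
          ((K : ℝ) / (N : ℝ)) * ∑ i ∈ B k, (‖X i - μ‖ ^ 2 - ‖X i - ν‖ ^ 2))
          = fun k => (fun x => 2 * x - ‖ν - μ‖ ^ 2)
              ((inner ℝ (blockMean X B k - μ) (ν - μ) : ℝ)) :=
        funext fun k => hterm μ ν k
      rw [h1]
      exact med_comp_mono hK0
        (fun k => (inner ℝ (blockMean X B k - μ) (ν - μ) : ℝ))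
        (φ := fun x => 2 * x - ‖ν - μ‖ ^ 2)
        (fun a b hab => sub_le_sub_right (by linarith) _)
    simp only [hmedterm]
    have hre : (⨆ ν : EVec d,
        (2 * (med fun k => (inner ℝ (blockMean X B k - μ) (ν - μ) : ℝ))
          - ‖ν - μ‖ ^ 2))
        = ⨆ w : EVec d,
            (2 * (med fun k => (inner ℝ (blockMean X B k - μ) w : ℝ)) - ‖w‖ ^ 2) := by
      rw [iSup, iSup]
      congr 1
      ext x
      simp only [Set.mem_range]
      constructor
      · rintro ⟨ν, rfl⟩; exact ⟨ν - μ, rfl⟩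
      · rintro ⟨w, rfl⟩; exact ⟨w + μ, by rw [add_sub_cancel_right]⟩
    rw [hre]
    exact (main μ).1
  refine ⟨key, ?_⟩
  ext μ
  simp only [Set.mem_setOf_eq]
  constructor
  · intro h μ'
    have h2 := h μ'
    rw [key μ, key μ'] at h2
    exact le_of_pow_le_pow_left₀ two_ne_zero (main μ').2 h2
  · intro h μ'
    rw [key μ, key μ']
    exact pow_le_pow_left₀ (main μ).2 (h μ') 2
end

section
/- Let S be a nonempty symmetric subset of ℝ^d, K an odd integer, X̄_1,…,X̄_K vectors in ℝ^d, μ* ∈ ℝ^d and R ≥ 0. Define g(v) = Med(⟨X̄_k, v⟩ : k ∈ [K]) and g*_S(μ) = sup_{v∈S}(⟨μ,v⟩ − g(v)). If for every v ∈ S, #{k ∈ [K] : ⟨X̄_k − μ*, v⟩ > R} < K/2, then g*_S(μ*) ≤ R. -/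
open MeasureTheory ProbabilityTheory

lemma med_ge {K : ℕ} (hK : Odd K) (a : Fin K → ℝ) (c : ℝ)
    (h : {k : Fin K | a k < c}.ncard ≤ K / 2) : c ≤ med a := by
  have hK0 : K ≠ 0 := by rintro rfl; simpa using hK
  rw [med, dif_neg hK0]
  by_contra hlt
  push_neg at hlt
  set m : Fin K := ⟨K / 2, Nat.div_lt_self (Nat.pos_of_ne_zero hK0) one_lt_two⟩
  have hsub : (Tuple.sort a : Fin K → Fin K) '' (Set.Iic m) ⊆ {k : Fin K | a k < c} := by
    rintro x ⟨j, hj, rfl⟩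
    exact lt_of_le_of_lt (Tuple.monotone_sort a hj) hlt
  have h1 : (Set.Iic m).ncard = ((Tuple.sort a : Fin K → Fin K) '' (Set.Iic m)).ncard :=
    (Set.ncard_image_of_injective _ (Equiv.injective _)).symm
  have h2 : ((Tuple.sort a : Fin K → Fin K) '' (Set.Iic m)).ncard
      ≤ {k : Fin K | a k < c}.ncard :=
    Set.ncard_le_ncard hsub (Set.toFinite _)
  have h3 : (Set.Iic m).ncard = K / 2 + 1 := by
    rw [← Finset.coe_Iic, Set.ncard_coe_finset, Fin.card_Iic]
  omega

/-- if for every `v ∈ S` strictly fewer than `K/2` of the blocks satisfy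
`⟨X̄_k - μ*, v⟩ > R`, then `g*_S(μ*) ≤ R`. -/
theorem stmt16 {d K : ℕ} (hK : Odd K)
    (S : Set (EVec d)) (hSne : S.Nonempty) (hSsym : ∀ v ∈ S, -v ∈ S)
    (Xb : Fin K → EVec d) (μstar : EVec d) (R : ℝ) (hR : 0 ≤ R)
    (h : ∀ v ∈ S,
      ({k : Fin K | R < (inner ℝ (Xb k - μstar) v : ℝ)}.ncard : ℝ) < (K : ℝ) / 2) :
    flT S (gFun Xb) μstar ≤ R := by
  have key : ∀ v ∈ S, (inner ℝ μstar v : ℝ) - gFun Xb v ≤ R := by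
    intro v hv
    have hv' := h (-v) (hSsym v hv)
    have hset : {k : Fin K | R < (inner ℝ (Xb k - μstar) (-v) : ℝ)}
        = {k : Fin K | (inner ℝ (Xb k) v : ℝ) < (inner ℝ μstar v : ℝ) - R} := by
      ext k
      simp only [Set.mem_setOf_eq, inner_neg_right, inner_sub_left]
      constructor <;> intro hk <;> linarith
    rw [hset] at hv'
    have hnat : {k : Fin K | (inner ℝ (Xb k) v : ℝ) < (inner ℝ μstar v : ℝ) - R}.ncard ≤ K / 2 := by
      set n := {k : Fin K | (inner ℝ (Xb k) v : ℝ) < (inner ℝ μstar v : ℝ) - R}.ncard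
      have h2 : ((2 * n : ℕ) : ℝ) < (K : ℝ) := by push_cast; linarith
      have h2' : 2 * n < K := by exact_mod_cast h2
      omega
    have := med_ge hK (fun k => (inner ℝ (Xb k) v : ℝ)) ((inner ℝ μstar v : ℝ) - R) hnat
    have hg : gFun Xb v = med fun k => (inner ℝ (Xb k) v : ℝ) := rfl
    rw [hg]; linarith
  exact Real.iSup_le (fun v => key v v.2) hR
end
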